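/- Let D be a poset of height h (the maximal length of a strictly increasing chain d₀ ⊏ d₁ ⊏ ... ⊏ d_h is h) and consider a system of n monotone equations over D. Then structured round-robin iteration (the recursive algorithm solve(i): if i = 0 return; solve(i−1); update x_i with the join operator ⊔; if the value changed, repeat solve(i)), started by solve(n) from any initial assignment, terminates after at most n + (h/2)·n·(n+1) evaluations of right-hand sides. -/

import Mathlib

/- Structured round-robin iteration `solve` with fuel, counting the number of
evaluations of right-hand sides.  `srr box f fuel i ρ` is `solve i` started
from assignment `ρ`; it returns the resulting assignment together with the
number of evaluations performed, or `none` if fuel ran out. -/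
open Classical in
noncomputable def srr {D : Type*} (box : D → D → D) (f : ℕ → (ℕ → D) → D) :
    ℕ → ℕ → (ℕ → D) → Option ((ℕ → D) × ℕ)
  | 0, _, _ => none
  | _fuel+1, 0, ρ => some (ρ, 0)
  | fuel+1, i+1, ρ =>
    match srr box f fuel i ρ with
    | none => none
    | some (ρ₁, c₁) =>
      let newv := box (ρ₁ i) (f i ρ₁)
      if newv = ρ₁ i then some (ρ₁, c₁ + 1)
      else
        match srr box f fuel (i+1) (Function.update ρ₁ i newv) with
        | none => none
        | some (ρ₂, c₂) => some (ρ₂, c₁ + 1 + c₂)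

open scoped Classical

/-- `SRRchainFrom d k`: there is a strictly increasing chain of length `k` starting at `d`. -/
def SRRchainFrom {D : Type*} [PartialOrder D] (d : D) (k : ℕ) : Prop :=
  ∃ e : ℕ → D, e 0 = d ∧ ∀ i < k, e i < e (i+1)

noncomputable def SRRrk {D : Type*} [PartialOrder D] (h : ℕ) (d : D) : ℕ :=
  Nat.findGreatest (SRRchainFrom d) h

section
variable {D : Type*} [PartialOrder D] {h : ℕ}

lemma SRRchainFrom_zero (d : D) : SRRchainFrom d 0 :=
  ⟨fun _ => d, rfl, fun i hi => absurd hi (Nat.not_lt_zero i)⟩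

lemma SRRrk_spec (d : D) : SRRchainFrom d (SRRrk h d) :=
  Nat.findGreatest_spec (Nat.zero_le h) (SRRchainFrom_zero d)

lemma SRRrk_le (d : D) : SRRrk h d ≤ h := Nat.findGreatest_le h

lemma SRRrk_ge {d : D} {k : ℕ} (hk : k ≤ h) (hc : SRRchainFrom d k) :
    k ≤ SRRrk h d := Nat.le_findGreatest hk hc

lemma SRRnot_chain_succ (hheight : ∀ d : ℕ → D, ¬ (∀ i, i ≤ h → d i < d (i+1)))
    (d : D) : ¬ SRRchainFrom d (h+1) := by
  rintro ⟨e, he0, hlt⟩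
  exact hheight e (fun i hi => hlt i (by omega))

lemma SRRchainFrom_of_lt {d d' : D} (hdd : d < d') {k : ℕ}
    (hc : SRRchainFrom d' k) : SRRchainFrom d (k+1) := by
  obtain ⟨e, he0, hlt⟩ := hc
  refine ⟨fun n => Nat.rec d (fun m _ => e m) n, rfl, fun i hi => ?_⟩
  cases i with
  | zero => simpa [he0] using hdd
  | succ m => exact hlt m (by omega)

lemma SRRrk_lt (hheight : ∀ d : ℕ → D, ¬ (∀ i, i ≤ h → d i < d (i+1)))
    {d d' : D} (hdd : d < d') : SRRrk h d' < SRRrk h d := by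
  have hc : SRRchainFrom d (SRRrk h d' + 1) := SRRchainFrom_of_lt hdd (SRRrk_spec d')
  have h1 : SRRrk h d' + 1 ≤ h := by
    rcases Nat.lt_or_ge (SRRrk h d') h with hl | hg
    · omega
    · have : SRRrk h d' = h := le_antisymm (SRRrk_le d') hg
      rw [this] at hc
      exact absurd hc (SRRnot_chain_succ hheight d)
  have := SRRrk_ge h1 hc
  omega

lemma SRRrk_mono (hheight : ∀ d : ℕ → D, ¬ (∀ i, i ≤ h → d i < d (i+1)))
    {d d' : D} (hdd : d ≤ d') : SRRrk h d' ≤ SRRrk h d := by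
  rcases hdd.lt_or_eq with hl | he
  · exact (SRRrk_lt hheight hl).le
  · rw [he]
end

theorem srr_fuel_mono {D : Type*} (box : D → D → D) (f : ℕ → (ℕ → D) → D) :
    ∀ fuel fuel' i ρ r, srr box f fuel i ρ = some r → fuel ≤ fuel' →
      srr box f fuel' i ρ = some r := by
  intro fuel
  induction fuel with
  | zero => intro fuel' i ρ r hr; simp [srr] at hr
  | succ fuel ih =>
    intro fuel' i ρ r hr hle
    obtain ⟨fuel'', rfl⟩ : ∃ k, fuel' = k + 1 := ⟨fuel' - 1, by omega⟩
    have hle' : fuel ≤ fuel'' := by omega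
    cases i with
    | zero => simpa [srr] using hr
    | succ i =>
      rw [srr] at hr ⊢
      cases h1 : srr box f fuel i ρ with
      | none => rw [h1] at hr; simp at hr
      | some p =>
        rw [h1] at hr
        obtain ⟨ρ₁, c₁⟩ := p
        rw [ih fuel'' i ρ (ρ₁, c₁) h1 hle']
        simp only at hr ⊢
        by_cases hc : box (ρ₁ i) (f i ρ₁) = ρ₁ i
        · simpa [hc] using hr
        · simp only [if_neg hc] at hr ⊢
          cases h2 : srr box f fuel (i+1) (Function.update ρ₁ i (box (ρ₁ i) (f i ρ₁))) with
          | none => rw [h2] at hr; simp at hr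
          | some q =>
            rw [h2] at hr
            rw [ih fuel'' _ _ q h2 hle']
            exact hr

theorem srr_inv {D : Type*} [SemilatticeSup D] {h : ℕ}
    (hheight : ∀ d : ℕ → D, ¬ (∀ i, i ≤ h → d i < d (i+1)))
    (f : ℕ → (ℕ → D) → D) :
    ∀ fuel i ρ ρ' c, srr (· ⊔ ·) f fuel i ρ = some (ρ', c) →
      (∀ j, ρ j ≤ ρ' j) ∧ (∀ j, i ≤ j → ρ' j = ρ j) ∧
        c + ∑ j ∈ Finset.range i, (j+1) * SRRrk h (ρ' j) ≤
          i + ∑ j ∈ Finset.range i, (j+1) * SRRrk h (ρ j) := by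
  intro fuel
  induction fuel with
  | zero => intro i ρ ρ' c hr; simp [srr] at hr
  | succ fuel ih =>
    intro i ρ ρ' c hr
    cases i with
    | zero =>
      simp only [srr, Option.some.injEq, Prod.mk.injEq] at hr
      obtain ⟨rfl, rfl⟩ := hr
      simp
    | succ i =>
      rw [srr] at hr
      cases h1 : srr (· ⊔ ·) f fuel i ρ with
      | none => rw [h1] at hr; simp at hr
      | some p =>
        rw [h1] at hr
        obtain ⟨ρ₁, c₁⟩ := p
        obtain ⟨H1le, H1fix, H1pot⟩ := ih i ρ ρ₁ c₁ h1
        have hfix : ρ₁ i = ρ i := H1fix i le_rfl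
        simp only at hr
        by_cases hc : ρ₁ i ⊔ f i ρ₁ = ρ₁ i
        · simp only [if_pos hc, Option.some.injEq, Prod.mk.injEq] at hr
          obtain ⟨rfl, rfl⟩ := hr
          refine ⟨H1le, fun j hj => H1fix j (by omega), ?_⟩
          rw [Finset.sum_range_succ, Finset.sum_range_succ, hfix]
          omega
        · simp only [if_neg hc] at hr
          set newv := ρ₁ i ⊔ f i ρ₁ with hnewv
          have hlt : ρ₁ i < newv := lt_of_le_of_ne le_sup_left (Ne.symm hc)
          cases h2 : srr (· ⊔ ·) f fuel (i+1) (Function.update ρ₁ i newv) with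
          | none => rw [h2] at hr; simp at hr
          | some q =>
            rw [h2] at hr
            obtain ⟨ρ₂, c₂⟩ := q
            simp only [Option.some.injEq, Prod.mk.injEq] at hr
            obtain ⟨rfl, rfl⟩ := hr
            obtain ⟨H2le, H2fix, H2pot⟩ := ih _ _ _ _ h2
            have hupd : ∀ j, j ≠ i → Function.update ρ₁ i newv j = ρ₁ j :=
              fun j hj => Function.update_of_ne hj _ _
            have hupdi : Function.update ρ₁ i newv i = newv := Function.update_self _ _ _
            refine ⟨?_, ?_, ?_⟩
            · intro j
              refine le_trans (H1le j) (le_trans ?_ (H2le j))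
              by_cases hj : j = i
              · subst hj; rw [hupdi]; exact hlt.le
              · rw [hupd j hj]
            · intro j hj
              rw [H2fix j hj, hupd j (by omega), H1fix j (by omega)]
            · -- arithmetic
              have hrknew : SRRrk h newv < SRRrk h (ρ i) := by
                rw [← hfix]; exact SRRrk_lt hheight hlt
              rw [Finset.sum_range_succ (f := fun j => (j+1) * SRRrk h (ρ j))]
              rw [Finset.sum_range_succ (f := fun j => (j+1) * SRRrk h (ρ₂ j))] at H2pot ⊢
              rw [Finset.sum_range_succ (f := fun j => (j+1) * SRRrk h (Function.update ρ₁ i newv j))] at H2pot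
              have hsumupd : ∑ j ∈ Finset.range i, (j+1) * SRRrk h (Function.update ρ₁ i newv j)
                  = ∑ j ∈ Finset.range i, (j+1) * SRRrk h (ρ₁ j) := by
                refine Finset.sum_congr rfl fun j hj => ?_
                rw [hupd j (by simp at hj; omega)]
              rw [hsumupd, hupdi] at H2pot
              have hmul : (i+1) * SRRrk h newv + (i+1) ≤ (i+1) * SRRrk h (ρ i) := by
                have := Nat.mul_le_mul_left (i+1) hrknew
                calc (i+1) * SRRrk h newv + (i+1) = (i+1) * (SRRrk h newv + 1) := by ring
                  _ ≤ (i+1) * SRRrk h (ρ i) := Nat.mul_le_mul_left _ (by omega)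
              omega

theorem srr_total {D : Type*} [SemilatticeSup D] {h : ℕ}
    (hheight : ∀ d : ℕ → D, ¬ (∀ i, i ≤ h → d i < d (i+1)))
    (f : ℕ → (ℕ → D) → D) :
    ∀ i ρ, ∃ fuel r, srr (· ⊔ ·) f fuel i ρ = some r := by
  intro i
  induction i with
  | zero => intro ρ; exact ⟨1, (ρ, 0), rfl⟩
  | succ i ih =>
    suffices H : ∀ k ρ, SRRrk h (ρ i) ≤ k → ∃ fuel r, srr (· ⊔ ·) f fuel (i+1) ρ = some r by
      intro ρ; exact H _ ρ le_rfl
    intro k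
    induction k using Nat.strong_induction_on with
    | _ k ihk =>
      intro ρ hk
      obtain ⟨fuel₁, ⟨ρ₁, c₁⟩, h1⟩ := ih ρ
      have hfix : ρ₁ i = ρ i := (srr_inv hheight f fuel₁ i ρ ρ₁ c₁ h1).2.1 i le_rfl
      by_cases hc : ρ₁ i ⊔ f i ρ₁ = ρ₁ i
      · refine ⟨fuel₁ + 1, (ρ₁, c₁ + 1), ?_⟩
        rw [srr, h1]
        simp [hc]
      · set newv := ρ₁ i ⊔ f i ρ₁ with hnewv
        have hlt : ρ₁ i < newv := lt_of_le_of_ne le_sup_left (Ne.symm hc)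
        have hrk : SRRrk h newv < k := by
          have : SRRrk h newv < SRRrk h (ρ i) := by rw [← hfix]; exact SRRrk_lt hheight hlt
          omega
        obtain ⟨fuel₂, ⟨ρ₂, c₂⟩, h2⟩ := ihk (SRRrk h newv) hrk (Function.update ρ₁ i newv)
          (by rw [Function.update_self])
        refine ⟨max fuel₁ fuel₂ + 1, (ρ₂, c₁ + 1 + c₂), ?_⟩
        rw [srr, srr_fuel_mono _ f fuel₁ _ i ρ _ h1 (le_max_left _ _)]
        simp only [if_neg hc]
        rw [srr_fuel_mono _ f fuel₂ _ (i+1) _ (ρ₂, c₂) h2 (le_max_right _ _)]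
        exact if_neg hc

/-- SRR with the join operator over a poset of height h terminates within
n + (h/2)·n·(n+1) evaluations (stated multiplied by 2 to stay in ℕ). -/
theorem stmt5 {D : Type*} [SemilatticeSup D] (h n : ℕ)
    (hheight : ∀ d : ℕ → D, ¬ (∀ i, i ≤ h → d i < d (i+1)))
    (f : ℕ → (ℕ → D) → D) (hmono : ∀ i, Monotone (f i)) (ρ0 : ℕ → D) :
    ∃ fuel ρ' c, srr (· ⊔ ·) f fuel n ρ0 = some (ρ', c) ∧
      2 * c ≤ 2 * n + h * n * (n + 1) := by
  obtain ⟨fuel, ⟨ρ', c⟩, hrun⟩ := srr_total hheight f n ρ0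
  refine ⟨fuel, ρ', c, hrun, ?_⟩
  have hpot := (srr_inv hheight f fuel n ρ0 ρ' c hrun).2.2
  have hc : c ≤ n + ∑ j ∈ Finset.range n, (j+1) * SRRrk h (ρ0 j) := by omega
  have hbound : ∑ j ∈ Finset.range n, (j+1) * SRRrk h (ρ0 j)
      ≤ ∑ j ∈ Finset.range n, (j+1) * h :=
    Finset.sum_le_sum fun j _ => Nat.mul_le_mul_left _ (SRRrk_le _)
  have hgauss : ∀ m : ℕ, 2 * ∑ j ∈ Finset.range m, (j+1) = m * (m+1) := by
    intro m
    induction m with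
    | zero => simp
    | succ m ihm =>
      rw [Finset.sum_range_succ, Nat.mul_add, ihm]
      ring
  have h2 : 2 * ∑ j ∈ Finset.range n, (j+1) * h = h * n * (n+1) := by
    calc 2 * ∑ j ∈ Finset.range n, (j+1) * h
        = (2 * ∑ j ∈ Finset.range n, (j+1)) * h := by
          rw [← Finset.sum_mul]; ring
      _ = h * n * (n+1) := by rw [hgauss n]; ring
  omega
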